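/- arXiv:2303.01408 — 2 statements merged into one kernel-verified Lean document; each statement's English description precedes it below -/
import Mathlib

section
/- Let a₁,…,a_m ∈ ℂ* with |aᵢ| ≠ 1, and set F = {(1:0:1), (-1:0:1), (0:1:1), (0:-1:1)} and S = {(aᵢ:1:0), (1:-conj(aᵢ):0) : i = 1,…,m} ∪ F ⊂ ℙ²(ℂ). Then the projective linear map g induced by the matrix with rows (0,-1,0), (1,0,0), (0,0,1) satisfies g(conj(S)) = S, where conj(S) is the image of S under coordinatewise complex conjugation. Consequently the field of moduli of S is ℝ. -/
open Projectivization
open scoped LinearAlgebra.Projectivization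

noncomputable section

abbrev P2 := ℙ ℂ (Fin 3 → ℂ)

/-- Coordinatewise complex conjugation on ℙ²(ℂ). -/
def conjP (p : P2) : P2 :=
  Projectivization.mk ℂ (fun i => starRingEnd ℂ (p.rep i)) (by
    intro h
    apply p.rep_nonzero
    funext i
    have := congrFun h i
    simpa using this)

/-- The four points F = {(1:0:1), (-1:0:1), (0:1:1), (0:-1:1)}. -/
def F : Set P2 :=
  {Projectivization.mk ℂ ![1, 0, 1] (fun h => by have := congrFun h 0; simp at this),
   Projectivization.mk ℂ ![-1, 0, 1] (fun h => by have := congrFun h 2; simp at this),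
   Projectivization.mk ℂ ![0, 1, 1] (fun h => by have := congrFun h 1; simp at this),
   Projectivization.mk ℂ ![0, -1, 1] (fun h => by have := congrFun h 2; simp at this)}

/-- The set S = {(aᵢ:1:0), (1:-conj(aᵢ):0) : i} ∪ F. -/
def Spts (m : ℕ) (a : Fin m → ℂ) : Set P2 :=
  (⋃ i : Fin m,
    {Projectivization.mk ℂ ![a i, 1, 0] (fun h => by have := congrFun h 1; simp at this),
     Projectivization.mk ℂ ![1, -(starRingEnd ℂ (a i)), 0]
       (fun h => by have := congrFun h 0; simp at this)}) ∪ F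

/-- The projective linear map g induced by the matrix with rows (0,-1,0), (1,0,0), (0,0,1). -/
def gEquiv : (Fin 3 → ℂ) ≃ₗ[ℂ] (Fin 3 → ℂ) where
  toFun v := ![-(v 1), v 0, v 2]
  invFun v := ![v 1, -(v 0), v 2]
  map_add' x y := by funext i; fin_cases i <;> simp <;> ring
  map_smul' c x := by funext i; fin_cases i <;> simp <;> ring
  left_inv v := by funext i; fin_cases i <;> simp <;> ring
  right_inv v := by funext i; fin_cases i <;> simp <;> ring

def gP : P2 → P2 := Projectivization.map gEquiv.toLinearMap gEquiv.injective

lemma conjP_mk (v : Fin 3 → ℂ) (hv : v ≠ 0)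
    (hv' : (fun i => starRingEnd ℂ (v i)) ≠ 0) :
    conjP (Projectivization.mk ℂ v hv)
      = Projectivization.mk ℂ (fun i => starRingEnd ℂ (v i)) hv' := by
  obtain ⟨c, hc⟩ := Projectivization.exists_smul_eq_mk_rep ℂ v hv
  unfold conjP
  rw [Projectivization.mk_eq_mk_iff']
  refine ⟨starRingEnd ℂ (c : ℂ), ?_⟩
  funext i
  rw [← hc]
  simp [Units.smul_def, map_mul]

lemma nz_conj (x y z : ℂ) (h : ![x, y, z] ≠ 0) :
    ![-(starRingEnd ℂ y), starRingEnd ℂ x, starRingEnd ℂ z] ≠ 0 := by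
  intro hh
  apply h
  have h0 := congrFun hh 0
  have h1 := congrFun hh 1
  have h2 := congrFun hh 2
  simp at h0 h1 h2
  funext i
  fin_cases i <;> simp_all

lemma gc3 (x y z : ℂ) (h : ![x, y, z] ≠ 0) :
    gP (conjP (Projectivization.mk ℂ ![x, y, z] h))
      = Projectivization.mk ℂ ![-(starRingEnd ℂ y), starRingEnd ℂ x, starRingEnd ℂ z]
          (nz_conj x y z h) := by
  rw [conjP_mk ![x,y,z] h
    (by intro hh; apply h; funext i; have := congrFun hh i; simpa using this)]
  unfold gP
  rw [Projectivization.map_mk]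
  rw [Projectivization.mk_eq_mk_iff']
  refine ⟨1, ?_⟩
  funext i
  fin_cases i <;> simp [gEquiv]

lemma gc_eq (x y z X Y Z : ℂ) (h : ![x, y, z] ≠ 0) (h' : ![X, Y, Z] ≠ 0) (c : ℂ)
    (e0 : c * X = -(starRingEnd ℂ y)) (e1 : c * Y = starRingEnd ℂ x)
    (e2 : c * Z = starRingEnd ℂ z) :
    gP (conjP (Projectivization.mk ℂ ![x, y, z] h)) = Projectivization.mk ℂ ![X, Y, Z] h' := by
  rw [gc3 x y z h, Projectivization.mk_eq_mk_iff']
  refine ⟨c, ?_⟩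
  funext i
  fin_cases i <;> simp [e0, e1, e2]

/-- for a₁,…,a_m ∈ ℂ* with |aᵢ| ≠ 1, the projective linear map g with matrix
rows (0,-1,0),(1,0,0),(0,0,1) satisfies g(conj(S)) = S for
S = {(aᵢ:1:0), (1:-conj(aᵢ):0)} ∪ {(±1:0:1),(0:±1:1)}; consequently S is projectively
equivalent to its complex conjugate, i.e. the field of moduli of S is ℝ. -/
theorem field_of_moduli_S_is_R (m : ℕ) (a : Fin m → ℂ)
    (ha0 : ∀ i, a i ≠ 0) (ha1 : ∀ i, ‖a i‖ ≠ 1) :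
    gP '' (conjP '' Spts m a) = Spts m a ∧
    ∃ T : (Fin 3 → ℂ) ≃ₗ[ℂ] (Fin 3 → ℂ),
      Projectivization.map T.toLinearMap T.injective '' (conjP '' Spts m a) = Spts m a := by
  have hA : ∀ i : Fin m,
      gP (conjP (Projectivization.mk ℂ ![a i, 1, 0]
        (fun h => by have := congrFun h 1; simp at this)))
      = Projectivization.mk ℂ ![1, -(starRingEnd ℂ (a i)), 0]
        (fun h => by have := congrFun h 0; simp at this) := fun i =>
    gc_eq _ _ _ _ _ _ _ _ (-1) (by simp) (by simp) (by simp)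
  have hB : ∀ i : Fin m,
      gP (conjP (Projectivization.mk ℂ ![1, -(starRingEnd ℂ (a i)), 0]
        (fun h => by have := congrFun h 0; simp at this)))
      = Projectivization.mk ℂ ![a i, 1, 0]
        (fun h => by have := congrFun h 1; simp at this) := fun i =>
    gc_eq _ _ _ _ _ _ _ _ 1 (by simp) (by simp) (by simp)
  have h1 : gP (conjP (Projectivization.mk ℂ ![1, 0, 1]
        (fun h => by have := congrFun h 0; simp at this)))
      = Projectivization.mk ℂ ![0, 1, 1]
        (fun h => by have := congrFun h 1; simp at this) :=
    gc_eq _ _ _ _ _ _ _ _ 1 (by simp) (by simp) (by simp)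
  have h2 : gP (conjP (Projectivization.mk ℂ ![-1, 0, 1]
        (fun h => by have := congrFun h 2; simp at this)))
      = Projectivization.mk ℂ ![0, -1, 1]
        (fun h => by have := congrFun h 2; simp at this) :=
    gc_eq _ _ _ _ _ _ _ _ 1 (by simp) (by simp) (by simp)
  have h3 : gP (conjP (Projectivization.mk ℂ ![0, 1, 1]
        (fun h => by have := congrFun h 1; simp at this)))
      = Projectivization.mk ℂ ![-1, 0, 1]
        (fun h => by have := congrFun h 2; simp at this) :=
    gc_eq _ _ _ _ _ _ _ _ 1 (by simp) (by simp) (by simp)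
  have h4 : gP (conjP (Projectivization.mk ℂ ![0, -1, 1]
        (fun h => by have := congrFun h 2; simp at this)))
      = Projectivization.mk ℂ ![1, 0, 1]
        (fun h => by have := congrFun h 0; simp at this) :=
    gc_eq _ _ _ _ _ _ _ _ 1 (by simp) (by simp) (by simp)
  have main : gP '' (conjP '' Spts m a) = Spts m a := by
    rw [← Set.image_comp]
    apply Set.Subset.antisymm
    · rintro p ⟨q, hq, rfl⟩
      simp only [Spts, F, Set.mem_union, Set.mem_iUnion, Set.mem_insert_iff,
        Set.mem_singleton_iff] at hq ⊢
      rcases hq with ⟨i, hq | hq⟩ | hq | hq | hq | hq <;> subst hq <;> simp only [Function.comp]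
      · exact Or.inl ⟨i, Or.inr (hA i)⟩
      · exact Or.inl ⟨i, Or.inl (hB i)⟩
      · rw [h1]; tauto
      · rw [h2]; tauto
      · rw [h3]; tauto
      · rw [h4]; tauto
    · intro p hp
      simp only [Spts, F, Set.mem_union, Set.mem_iUnion, Set.mem_insert_iff,
        Set.mem_singleton_iff] at hp
      rcases hp with ⟨i, hp | hp⟩ | hp | hp | hp | hp <;> subst hp
      · exact ⟨_, by simp only [Spts, F, Set.mem_union, Set.mem_iUnion, Set.mem_insert_iff,
          Set.mem_singleton_iff]; exact Or.inl ⟨i, Or.inr rfl⟩, hB i⟩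
      · exact ⟨_, by simp only [Spts, F, Set.mem_union, Set.mem_iUnion, Set.mem_insert_iff,
          Set.mem_singleton_iff]; exact Or.inl ⟨i, Or.inl rfl⟩, hA i⟩
      · exact ⟨_, by simp only [Spts, F, Set.mem_union, Set.mem_iUnion, Set.mem_insert_iff,
          Set.mem_singleton_iff]; tauto, h4⟩
      · exact ⟨_, by simp only [Spts, F, Set.mem_union, Set.mem_iUnion, Set.mem_insert_iff,
          Set.mem_singleton_iff]; tauto, h3⟩
      · exact ⟨_, by simp only [Spts, F, Set.mem_union, Set.mem_iUnion, Set.mem_insert_iff,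
          Set.mem_singleton_iff]; tauto, h1⟩
      · exact ⟨_, by simp only [Spts, F, Set.mem_union, Set.mem_iUnion, Set.mem_insert_iff,
          Set.mem_singleton_iff]; tauto, h2⟩
  exact ⟨main, gEquiv, main⟩

end
end

section
/- The subgroup of GL₂(ℂ) (acting on ℙ²(ℂ) by acting on the first two coordinates and fixing the third) stabilizing the set F = {(1:0:1), (-1:0:1), (0:1:1), (0:-1:1)} setwise is a dihedral group of order 8, generated by the rotation (x,y) ↦ (-y,x) and the reflection (x,y) ↦ (y,x). -/
noncomputable section

/-- The rotation (x,y) ↦ (-y,x) as an element of GL₂(ℂ). -/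
def r : GL (Fin 2) ℂ :=
  ⟨!![0,-1;1,0], !![0,1;-1,0],
    by norm_num [Matrix.mul_fin_two, ← Matrix.one_fin_two],
    by norm_num [Matrix.mul_fin_two, ← Matrix.one_fin_two]⟩

/-- The reflection (x,y) ↦ (y,x) as an element of GL₂(ℂ). -/
def s : GL (Fin 2) ℂ :=
  ⟨!![0,1;1,0], !![0,1;1,0],
    by norm_num [Matrix.mul_fin_two, ← Matrix.one_fin_two],
    by norm_num [Matrix.mul_fin_two, ← Matrix.one_fin_two]⟩

/-- The affine representatives of F = {(1:0:1), (-1:0:1), (0:1:1), (0:-1:1)} in ℂ². -/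
def V : Set (Fin 2 → ℂ) := {![1,0], ![-1,0], ![0,1], ![0,-1]}

namespace StabAux

lemma v1 : ((1 : GL (Fin 2) ℂ) : Matrix (Fin 2) (Fin 2) ℂ) = !![1,0;0,1] := by
  rw [Units.val_one, Matrix.one_fin_two]

lemma vr : (r : GL (Fin 2) ℂ).val = !![0,-1;1,0] := rfl
lemma vs : (s : GL (Fin 2) ℂ).val = !![0,1;1,0] := rfl

lemma vr2 : ((r^2 : GL (Fin 2) ℂ) : Matrix (Fin 2) (Fin 2) ℂ) = !![-1,0;0,-1] := by
  norm_num [pow_succ, Units.val_mul, vr, Matrix.mul_fin_two]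

lemma vr3 : ((r^3 : GL (Fin 2) ℂ) : Matrix (Fin 2) (Fin 2) ℂ) = !![0,1;-1,0] := by
  norm_num [pow_succ, Units.val_mul, vr, Matrix.mul_fin_two]

lemma vrs : ((r*s : GL (Fin 2) ℂ) : Matrix (Fin 2) (Fin 2) ℂ) = !![-1,0;0,1] := by
  norm_num [Units.val_mul, vr, vs, Matrix.mul_fin_two]

lemma vr2s : ((r^2*s : GL (Fin 2) ℂ) : Matrix (Fin 2) (Fin 2) ℂ) = !![0,-1;-1,0] := by
  norm_num [Units.val_mul, pow_succ, vr, vs, Matrix.mul_fin_two]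

lemma vr3s : ((r^3*s : GL (Fin 2) ℂ) : Matrix (Fin 2) (Fin 2) ℂ) = !![1,0;0,-1] := by
  norm_num [Units.val_mul, pow_succ, vr, vs, Matrix.mul_fin_two]

lemma hr4 : (r : GL (Fin 2) ℂ)^4 = 1 := by
  apply Units.ext
  norm_num [pow_succ, Units.val_mul, vr, Matrix.mul_fin_two, ← Matrix.one_fin_two]

lemma hs2 : (s : GL (Fin 2) ℂ)^2 = 1 := by
  apply Units.ext
  norm_num [pow_succ, Units.val_mul, vs, Matrix.mul_fin_two, ← Matrix.one_fin_two]

lemma hrs : r * s = s * r^3 := by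
  apply Units.ext
  rw [Units.val_mul, Units.val_mul, vr3, vr, vs]
  norm_num [Matrix.mul_fin_two]

lemma rpow_mul_s (n : ℕ) : r^n * s = s * r^(3*n) := by
  induction n with
  | zero => simp
  | succ n ih =>
    have : r^(n+1) * s = r * (r^n * s) := by rw [← mul_assoc, pow_succ']
    rw [this, ih, ← mul_assoc, hrs, mul_assoc, ← pow_add]
    ring_nf

lemma rpow_mod (n : ℕ) : (r : GL (Fin 2) ℂ)^n = r^(n % 4) := by
  conv_lhs => rw [← Nat.div_add_mod n 4]
  rw [pow_add, pow_mul, hr4, one_pow, one_mul]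

lemma rpow_cast {m k : ℕ} (h : (m : ZMod 4) = (k : ZMod 4)) : (r : GL (Fin 2) ℂ)^m = r^k := by
  rw [rpow_mod m, rpow_mod k]
  exact congrArg _ ((ZMod.natCast_eq_natCast_iff m k 4).mp h)

def toGL : DihedralGroup 4 → GL (Fin 2) ℂ
  | .r i => r ^ i.val
  | .sr i => s * r ^ i.val

def φ : DihedralGroup 4 →* GL (Fin 2) ℂ where
  toFun := toGL
  map_one' := by
    show r ^ (0 : ZMod 4).val = 1
    simp [ZMod.val_zero]
  map_mul' := by
    rintro (i | i) (j | j)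
    · show r ^ (i + j).val = r ^ i.val * r ^ j.val
      rw [← pow_add]
      apply rpow_cast
      push_cast [ZMod.natCast_val, ZMod.cast_id]
      ring
    · show s * r ^ (j - i).val = r ^ i.val * (s * r ^ j.val)
      rw [← mul_assoc, rpow_mul_s, mul_assoc, ← pow_add]
      congr 1
      apply rpow_cast
      push_cast [ZMod.natCast_val, ZMod.cast_id]
      have h3 : (3 : ZMod 4) = -1 := by decide
      rw [h3]; ring
    · show s * r ^ (i + j).val = s * r ^ i.val * r ^ j.val
      rw [mul_assoc, ← pow_add]
      congr 1
      apply rpow_cast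
      push_cast [ZMod.natCast_val, ZMod.cast_id]
      ring
    · show r ^ (j - i).val = s * r ^ i.val * (s * r ^ j.val)
      rw [mul_assoc, ← mul_assoc (r ^ i.val), rpow_mul_s, ← mul_assoc, ← mul_assoc,
        ← pow_two, hs2, one_mul, ← pow_add]
      apply rpow_cast
      push_cast [ZMod.natCast_val, ZMod.cast_id]
      have h3 : (3 : ZMod 4) = -1 := by decide
      rw [h3]; ring


lemma mulVec_eq (M : Matrix (Fin 2) (Fin 2) ℂ) (v : Fin 2 → ℂ) :
    M.mulVec v = ![M 0 0 * v 0 + M 0 1 * v 1, M 1 0 * v 0 + M 1 1 * v 1] := by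
  funext i
  fin_cases i <;> simp [Matrix.mulVec, dotProduct, Fin.sum_univ_two]

lemma eq_of_cols (M : Matrix (Fin 2) (Fin 2) ℂ) :
    M = !![M.mulVec ![1,0] 0, M.mulVec ![0,1] 0; M.mulVec ![1,0] 1, M.mulVec ![0,1] 1] := by
  ext i j
  fin_cases i <;> fin_cases j <;> simp [mulVec_eq]

def Stab : Subgroup (GL (Fin 2) ℂ) where
  carrier := {A : GL (Fin 2) ℂ | (fun v => A.val.mulVec v) '' V = V}
  one_mem' := by
    show (fun v => (1 : GL (Fin 2) ℂ).val.mulVec v) '' V = V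
    simp only [Units.val_one, Matrix.one_mulVec, Set.image_id']
  mul_mem' := by
    intro a b ha hb
    have : (fun v => (a*b).val.mulVec v) '' V
        = (fun v => a.val.mulVec v) '' ((fun v => b.val.mulVec v) '' V) := by
      rw [Set.image_image]
      simp only [Units.val_mul, Matrix.mulVec_mulVec]
    rw [Set.mem_setOf_eq, this, hb, ha]
  inv_mem' := by
    intro a ha
    have key : ∀ v, (a⁻¹).val.mulVec (a.val.mulVec v) = v := by
      intro v
      rw [Matrix.mulVec_mulVec]
      norm_cast
      simp [Matrix.one_mulVec]
    have : (fun v => (a⁻¹).val.mulVec v) '' V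
        = (fun v => (a⁻¹).val.mulVec v) '' ((fun v => a.val.mulVec v) '' V) := by
      rw [Set.mem_setOf_eq] at ha
      rw [ha]
    rw [Set.mem_setOf_eq, this, Set.image_image]
    simp only [key, Set.image_id']

lemma r_mem_stab : r ∈ Stab := by
  show (fun v => (r : GL (Fin 2) ℂ).val.mulVec v) '' V = V
  simp only [V, Set.image_insert_eq, Set.image_singleton, mulVec_eq, vr]
  norm_num
  ext x
  simp only [Set.mem_insert_iff, Set.mem_singleton_iff]
  tauto

lemma s_mem_stab : s ∈ Stab := by
  show (fun v => (s : GL (Fin 2) ℂ).val.mulVec v) '' V = V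
  simp only [V, Set.image_insert_eq, Set.image_singleton, mulVec_eq, vs]
  norm_num
  ext x
  simp only [Set.mem_insert_iff, Set.mem_singleton_iff]
  tauto

lemma mem_of_val {G : Subgroup (GL (Fin 2) ℂ)} {A B : GL (Fin 2) ℂ}
    (h : A.val = B.val) (hB : B ∈ G) : A ∈ G := by
  rwa [Units.ext h]

lemma stab_le_closure : ∀ A : GL (Fin 2) ℂ,
    (fun v => A.val.mulVec v) '' V = V → A ∈ Subgroup.closure {r, s} := by
  intro A hA
  have hr : r ∈ Subgroup.closure ({r, s} : Set (GL (Fin 2) ℂ)) :=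
    Subgroup.subset_closure (by simp)
  have hs : s ∈ Subgroup.closure ({r, s} : Set (GL (Fin 2) ℂ)) :=
    Subgroup.subset_closure (by simp)
  have hmem : ∀ v ∈ V, A.val.mulVec v ∈ V := fun v hv => hA ▸ Set.mem_image_of_mem _ hv
  have h0 : A.val.mulVec ![1,0] ∈ V := hmem _ (by simp [V])
  have h1 : A.val.mulVec ![0,1] ∈ V := hmem _ (by simp [V])
  have hdet : A.val.det ≠ 0 := by
    have : IsUnit A.val := A.isUnit
    rw [Matrix.isUnit_iff_isUnit_det, isUnit_iff_ne_zero] at this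
    exact this
  have hval := eq_of_cols A.val
  simp only [V, Set.mem_insert_iff, Set.mem_singleton_iff] at h0 h1
  rcases h0 with hc0 | hc0 | hc0 | hc0 <;> rcases h1 with hc1 | hc1 | hc1 | hc1 <;>
    rw [hc0, hc1] at hval <;> norm_num at hval <;>
    first
      | exact mem_of_val (hval.trans v1.symm) (one_mem _)
      | exact mem_of_val (hval.trans vr.symm) hr
      | exact mem_of_val (hval.trans vr2.symm) (pow_mem hr 2)
      | exact mem_of_val (hval.trans vr3.symm) (pow_mem hr 3)
      | exact mem_of_val (hval.trans vs.symm) hs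
      | exact mem_of_val (hval.trans vrs.symm) (mul_mem hr hs)
      | exact mem_of_val (hval.trans vr2s.symm) (mul_mem (pow_mem hr 2) hs)
      | exact mem_of_val (hval.trans vr3s.symm) (mul_mem (pow_mem hr 3) hs)
      | (exfalso; apply hdet; rw [hval]; norm_num [Matrix.det_fin_two_of])

lemma phi_injective : Function.Injective φ := by
  rw [injective_iff_map_eq_one]
  rintro (i | i) hx
  · have hv : i.val < 4 := ZMod.val_lt i
    suffices h : i = 0 by rw [h]; rfl
    by_contra h
    have hne : i.val ≠ 0 := fun h0 => h ((ZMod.val_eq_zero i).mp h0)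
    change r ^ i.val = 1 at hx
    set k := i.val with hk
    interval_cases k <;>
      [exact hne rfl; skip; skip; skip] <;>
      · have h2 := congrArg Units.val hx
        norm_num [Units.val_pow_eq_pow_val, Units.val_mul, pow_succ, vr, vs,
          Matrix.mul_fin_two, Units.val_one, Matrix.one_fin_two,
          ← Matrix.ext_iff, Fin.forall_fin_two] at h2
  · exfalso
    have hv : i.val < 4 := ZMod.val_lt i
    change s * r ^ i.val = 1 at hx
    set k := i.val with hk
    interval_cases k <;>
      · have h2 := congrArg Units.val hx
        norm_num [Units.val_pow_eq_pow_val, Units.val_mul, pow_succ, vr, vs,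
          Matrix.mul_fin_two, Units.val_one, Matrix.one_fin_two,
          ← Matrix.ext_iff, Fin.forall_fin_two] at h2

lemma phi_range : φ.range = Subgroup.closure {r, s} := by
  apply le_antisymm
  · rintro x ⟨y, rfl⟩
    have hr : r ∈ Subgroup.closure ({r, s} : Set (GL (Fin 2) ℂ)) :=
      Subgroup.subset_closure (by simp)
    have hs : s ∈ Subgroup.closure ({r, s} : Set (GL (Fin 2) ℂ)) :=
      Subgroup.subset_closure (by simp)
    rcases y with i | i
    · exact pow_mem hr _
    · exact mul_mem hs (pow_mem hr _)
  · rw [Subgroup.closure_le]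
    rintro x (rfl | rfl)
    · refine ⟨.r 1, ?_⟩
      show r ^ (1 : ZMod 4).val = r
      have h1 : (1 : ZMod 4).val = 1 := rfl
      rw [h1, pow_one]
    · exact ⟨.sr 0, by show s * r ^ (0 : ZMod 4).val = s; simp⟩

end StabAux

/-- the subgroup of GL₂(ℂ) (acting on ℙ²(ℂ) through the block embedding
GL₂ ⊂ PGL₃ fixing the third coordinate) stabilizing F setwise — equivalently, stabilizing
V = {(1,0),(-1,0),(0,1),(0,-1)} ⊂ ℂ² — is the dihedral group of order 8 generated by the
rotation r : (x,y) ↦ (-y,x) and the reflection s : (x,y) ↦ (y,x). -/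
theorem stabilizer_of_F_is_dihedral :
    {A : GL (Fin 2) ℂ | (fun v => A.val.mulVec v) '' V = V}
      = (Subgroup.closure {r, s} : Subgroup (GL (Fin 2) ℂ)) ∧
    Nonempty ((Subgroup.closure {r, s} : Subgroup (GL (Fin 2) ℂ)) ≃* DihedralGroup 4) := by
  constructor
  · apply Set.eq_of_subset_of_subset
    · intro A hA
      exact StabAux.stab_le_closure A hA
    · intro A hA
      have h1 : Subgroup.closure ({r, s} : Set (GL (Fin 2) ℂ)) ≤ StabAux.Stab := by
        rw [Subgroup.closure_le]
        rintro x (rfl | rfl)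
        · exact StabAux.r_mem_stab
        · exact StabAux.s_mem_stab
      exact h1 hA
  · exact ⟨((MulEquiv.subgroupCongr StabAux.phi_range.symm).trans
      (MonoidHom.ofInjective StabAux.phi_injective).symm)⟩

end
end
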